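/- A symmetric polynomial P in n variables vanishes whenever x_1 = ... = x_{k+1} if and only if for every j ≥ 0 the polynomial (∂_n^j P)(x_1,...,x_{n-1},0) in n-1 variables vanishes whenever x_1 = ... = x_{k+1}, provided n ≥ k+2. -/

import Mathlib

open MvPolynomial Polynomial

noncomputable def toPoly {n : ℕ} (y : Fin n → ℂ) :
    MvPolynomial (Fin (n + 1)) ℂ →ₐ[ℂ] Polynomial ℂ :=
  aeval (Fin.snoc (fun i => Polynomial.C (y i)) Polynomial.X)

lemma eval_toPoly {n : ℕ} (y : Fin n → ℂ) (t : ℂ) (P : MvPolynomial (Fin (n + 1)) ℂ) :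
    (toPoly y P).eval t = eval (Fin.snoc y t) P := by
  have : (Polynomial.aeval t : Polynomial ℂ →ₐ[ℂ] ℂ).comp (toPoly y)
      = MvPolynomial.aeval (Fin.snoc y t) := by
    apply MvPolynomial.algHom_ext
    intro i
    refine Fin.lastCases ?_ ?_ i <;> simp [toPoly]
  have h := congrArg (fun f => f P) this
  simpa using h

lemma toPoly_pderiv {n : ℕ} (y : Fin n → ℂ) (P : MvPolynomial (Fin (n + 1)) ℂ) :
    toPoly y (pderiv (Fin.last n) P) = derivative (toPoly y P) := by
  induction P using MvPolynomial.induction_on with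
  | C a => simp [toPoly]
  | add p q hp hq => simp [hp, hq]
  | mul_X p i hp =>
      rw [pderiv_mul, map_add, map_mul, map_mul, hp, map_mul, derivative_mul]
      refine Fin.lastCases ?_ ?_ i
      · simp [toPoly]
      · intro i
        have h1 : pderiv (Fin.last n) (MvPolynomial.X i.castSucc : MvPolynomial (Fin (n+1)) ℂ) = 0 :=
          pderiv_X_of_ne (Fin.castSucc_lt_last i).ne
        have h2 : toPoly y (MvPolynomial.X i.castSucc) = Polynomial.C (y i) := by
          simp [toPoly]
        rw [h1, h2]; simp

lemma toPoly_pderiv_iterate {n : ℕ} (y : Fin n → ℂ) (P : MvPolynomial (Fin (n + 1)) ℂ)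
    (j : ℕ) :
    toPoly y ((pderiv (Fin.last n))^[j] P) = derivative^[j] (toPoly y P) := by
  induction j generalizing P with
  | zero => rfl
  | succ j ih =>
      rw [Function.iterate_succ_apply, ih, toPoly_pderiv, ← Function.iterate_succ_apply, Function.iterate_succ_apply']

/-- For n+1 ≥ k+2, a symmetric polynomial P in n+1 variables
vanishes whenever the first k+1 variables coincide iff for every j ≥ 0 the
restriction (∂_{last}^j P)|_{x_{last}=0}, a polynomial in the first n variables,
vanishes whenever its first k+1 variables coincide. -/
theorem vanishing_iff_derivatives_vanish (k n : ℕ) (hn : k + 2 ≤ n + 1)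
    (P : MvPolynomial (Fin (n + 1)) ℂ) (hsym : P.IsSymmetric) :
    (∀ x : Fin (n + 1) → ℂ,
        (∀ a b : Fin (n + 1), (a : ℕ) ≤ k → (b : ℕ) ≤ k → x a = x b) →
        eval x P = 0)
    ↔ (∀ j : ℕ, ∀ y : Fin n → ℂ,
        (∀ a b : Fin n, (a : ℕ) ≤ k → (b : ℕ) ≤ k → y a = y b) →
        eval (Fin.snoc y 0) ((pderiv (Fin.last n))^[j] P) = 0) := by
  have hkn : k < n := by omega
  constructor
  · intro hP j y hy
    have hQ : toPoly y P = 0 := by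
      apply Polynomial.funext
      intro t
      rw [eval_toPoly, Polynomial.eval_zero]
      apply hP
      intro a b ha hb
      have ha' : a ≠ Fin.last n := by
        intro h; rw [h] at ha; simp [Fin.last] at ha; omega
      have hb' : b ≠ Fin.last n := by
        intro h; rw [h] at hb; simp [Fin.last] at hb; omega
      obtain ⟨a', rfl⟩ := Fin.exists_castSucc_eq.mpr ha'
      obtain ⟨b', rfl⟩ := Fin.exists_castSucc_eq.mpr hb'
      rw [Fin.snoc_castSucc, Fin.snoc_castSucc]
      exact hy a' b' ha hb
    rw [← eval_toPoly, toPoly_pderiv_iterate, hQ, iterate_derivative_zero,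
      Polynomial.eval_zero]
  · intro h x hx
    set y : Fin n → ℂ := Fin.init x with hy
    have hycond : ∀ a b : Fin n, (a : ℕ) ≤ k → (b : ℕ) ≤ k → y a = y b := by
      intro a b ha hb
      exact hx a.castSucc b.castSucc (by simpa) (by simpa)
    have hQ : toPoly y P = 0 := by
      ext m
      have hm := h m y hycond
      rw [← eval_toPoly, toPoly_pderiv_iterate, ← Polynomial.coeff_zero_eq_eval_zero,
        coeff_iterate_derivative] at hm
      simp only [zero_add, Nat.descFactorial_self, smul_eq_mul, nsmul_eq_mul] at hm ⊢
      have : ((m.factorial : ℂ)) ≠ 0 := by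
        exact_mod_cast m.factorial_ne_zero
      rcases mul_eq_zero.mp hm with h' | h'
      · exact absurd h' this
      · simpa using h'
    have : eval x P = (toPoly y P).eval (x (Fin.last n)) := by
      rw [eval_toPoly, hy, Fin.snoc_init_self]
    rw [this, hQ, Polynomial.eval_zero]
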